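/- Let a and n be integers with a ≥ 7, a ≡ 3 (mod 4), n ≥ 3, n ≡ 0 (mod 4), and a(n−2) ≥ 8n−2. Then the Frobenius number of the triple {S_{a,n}, S_{a,n+1}, S_{a,n+2}} equals (4n−2)·S_{a,n+1} + ((a(n−2)−2)/4)·S_{a,n+2} − S_{a,n}. -/

import Mathlib

set_option maxHeartbeats 1000000 in
lemma key_nonrep (a n k p q r : ℤ) (ha : 7 ≤ a) (hn : 4 ≤ n)
    (hk : a * (n - 2) = 4 * k + 2) (hbig : 8 * n - 2 ≤ a * (n - 2))
    (hp : 0 ≤ p) (hq : 0 ≤ q) (hr : 0 ≤ r)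
    (heq : (p + 1) * (a * n * (n - 2) + 1) + q * (a * (n + 1) * (n - 1) + 1)
        + r * (a * (n + 2) * n + 1)
      = (4 * n - 2) * (a * (n + 1) * (n - 1) + 1) + k * (a * (n + 2) * n + 1)) : False := by
  obtain ⟨s, hs, hNs⟩ : ∃ s : ℤ,
      (p + 1 + q + r) - (4 * n - 2 + k) = a * s ∧
      (2 * n - 1) * (4 * n - 2) + 4 * n * k - ((2 * n - 1) * q + 4 * n * r)
        = s * (a * n * (n - 2) + 1) := by
    refine ⟨(2 * n - 1) * (4 * n - 2) + 4 * n * k - ((2 * n - 1) * q + 4 * n * r)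
      - ((p + 1 + q + r) - (4 * n - 2 + k)) * (n * (n - 2)), ?_, ?_⟩
    · linear_combination heq
    · linear_combination (n * (n - 2)) * heq
  have hMA : (2 * n - 1) * (4 * n - 2) + 4 * n * k
      = (a * n * (n - 2) + 1) + 8 * n ^ 2 - 10 * n + 1 := by
    linear_combination (-n) * hk
  have hAlb : 8 * n ^ 2 - 2 * n + 1 ≤ a * n * (n - 2) + 1 := by
    nlinarith [mul_le_mul_of_nonneg_left hbig (show (0:ℤ) ≤ n by linarith)]
  have hApos : (0:ℤ) < a * n * (n - 2) + 1 := by nlinarith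
  have hN0 : (0:ℤ) ≤ (2 * n - 1) * q + 4 * n * r := by
    have := mul_nonneg (show (0:ℤ) ≤ 2 * n - 1 by linarith) hq
    have := mul_nonneg (show (0:ℤ) ≤ 4 * n by linarith) hr
    linarith
  rcases le_or_gt 2 s with hs2 | hs1
  · -- s ≥ 2 : N would be negative
    have hprod : 0 ≤ (s - 2) * (a * n * (n - 2) + 1) :=
      mul_nonneg (by linarith) (by linarith)
    nlinarith [hNs, hMA, hprod, hN0, hAlb]
  rcases le_or_gt 1 s with hs1' | hs0
  · -- s = 1
    have hseq : s = 1 := by omega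
    rw [hseq] at hNs
    have hNdef : (2 * n - 1) * q + 4 * n * r = 8 * n ^ 2 - 10 * n + 1 := by
      linear_combination hMA - hNs
    have hqj : q = 4 * n * (4 * n ^ 2 - 7 * n + 2 - ((2 * n - 1) * r + (n - 1) * q))
        + (4 * n - 1) := by
      linear_combination (2 * n - 1) * hNdef
    set j : ℤ := 4 * n ^ 2 - 7 * n + 2 - ((2 * n - 1) * r + (n - 1) * q) with hj
    have hj0 : 0 ≤ j := by
      by_contra hcon
      push_neg at hcon
      have hj1 : j ≤ -1 := Int.lt_add_one_iff.mp (by linarith)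
      nlinarith [mul_le_mul_of_nonneg_left hj1 (show (0:ℤ) ≤ 4 * n by linarith)]
    have hq4 : 4 * n - 1 ≤ q := by
      nlinarith [mul_nonneg (show (0:ℤ) ≤ 4 * n by linarith) hj0]
    nlinarith [mul_le_mul_of_nonneg_left hq4 (show (0:ℤ) ≤ 2 * n - 1 by linarith),
      mul_nonneg (show (0:ℤ) ≤ 4 * n by linarith) hr]
  rcases le_or_gt 0 s with hs0' | hsneg
  · -- s = 0
    have hseq : s = 0 := by omega
    rw [hseq] at hNs hs
    have hNdef : (2 * n - 1) * q + 4 * n * r = 4 * n * k + 8 * n ^ 2 - 8 * n + 2 := by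
      linear_combination -hNs
    have hbud : q + r ≤ 4 * n - 3 + k := by
      have : p + 1 + q + r = 4 * n - 2 + k := by linarith [hs]
      linarith
    have hqj : q = 4 * n * ((2 * n - 1) * k + 4 * n ^ 2 - 6 * n + 2
        - ((2 * n - 1) * r + (n - 1) * q)) + (4 * n - 2) := by
      linear_combination (2 * n - 1) * hNdef
    set j : ℤ := (2 * n - 1) * k + 4 * n ^ 2 - 6 * n + 2 - ((2 * n - 1) * r + (n - 1) * q) with hj
    have hj0 : 0 ≤ j := by
      by_contra hcon
      push_neg at hcon
      have hj1 : j ≤ -1 := Int.lt_add_one_iff.mp (by linarith)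
      nlinarith [mul_le_mul_of_nonneg_left hj1 (show (0:ℤ) ≤ 4 * n by linarith)]
    have hq4 : 4 * n - 2 ≤ q := by
      nlinarith [mul_nonneg (show (0:ℤ) ≤ 4 * n by linarith) hj0]
    nlinarith [mul_le_mul_of_nonneg_left hbud (show (0:ℤ) ≤ 4 * n by linarith),
      mul_le_mul_of_nonneg_left hq4 (show (0:ℤ) ≤ 2 * n + 1 by linarith), hNdef]
  · -- s ≤ -1
    have hsle : s ≤ -1 := by omega
    have hbud : q + r ≤ 4 * n - 3 + k + a * s := by linarith [hs]
    have has : a * s ≤ -7 := by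
      nlinarith [mul_le_mul_of_nonneg_left hsle (show (0:ℤ) ≤ a by linarith)]
    have hsA : ((-s) - 1) * (a * n * (n - 2) + 1) ≥ 0 :=
      mul_nonneg (by linarith) (by linarith)
    nlinarith [mul_le_mul_of_nonneg_left hbud (show (0:ℤ) ≤ 4 * n by linarith),
      mul_le_mul_of_nonneg_left has (show (0:ℤ) ≤ 4 * n by linarith),
      mul_nonneg (show (0:ℤ) ≤ 2 * n + 1 by linarith) hq, hNs, hMA, hAlb, hsA]



set_option maxHeartbeats 1000000 in
lemma key_rep (a n k m : ℤ) (ha : 7 ≤ a) (hn : 4 ≤ n)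
    (hk : a * (n - 2) = 4 * k + 2) (hbig : 8 * n - 2 ≤ a * (n - 2))
    (hm : (4 * n - 2) * (a * (n + 1) * (n - 1) + 1) + k * (a * (n + 2) * n + 1)
      < m + (a * n * (n - 2) + 1)) :
    ∃ p q r : ℤ, 0 ≤ p ∧ 0 ≤ q ∧ 0 ≤ r ∧
      p * (a * n * (n - 2) + 1) + q * (a * (n + 1) * (n - 1) + 1)
        + r * (a * (n + 2) * n + 1) = m := by
  set A : ℤ := a * n * (n - 2) + 1 with hA
  set B : ℤ := a * (n + 1) * (n - 1) + 1 with hB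
  set C : ℤ := a * (n + 2) * n + 1 with hC
  have hBA : B = A + a * (2 * n - 1) := by rw [hA, hB]; ring
  have hCA : C = A + 4 * a * n := by rw [hA, hC]; ring
  have hA4 : A = 4 * n * k + 2 * n + 1 := by rw [hA]; linear_combination n * hk
  have hAlb : 8 * n ^ 2 - 2 * n + 1 ≤ A := by
    rw [hA]
    nlinarith [mul_le_mul_of_nonneg_left hbig (show (0:ℤ) ≤ n by linarith)]
  have hApos : (0:ℤ) < A := by nlinarith
  have hBpos : (0:ℤ) < B := by rw [hBA]; nlinarith
  have hCpos : (0:ℤ) < C := by rw [hCA]; nlinarith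
  have hBC : B < C := by rw [hBA, hCA]; nlinarith
  have hkn : 2 * n - 1 ≤ k := by linarith
  -- the residue ν
  set ν : ℤ := (m * (A - n * (n - 2))) % A with hν
  have hν0 : 0 ≤ ν := Int.emod_nonneg _ (ne_of_gt hApos)
  have hνA : ν < A := Int.emod_lt_of_pos _ hApos
  have hdm : A ∣ m * (A - n * (n - 2)) - ν := Int.dvd_self_sub_of_emod_eq hν.symm
  have hmod : A ∣ a * ν - m := by
    obtain ⟨c, hc⟩ := hdm
    exact ⟨m * (a - 1) - a * c, by linear_combination (-a) * hc + m * hA⟩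
  -- the residue q₀ mod 4n
  set q₀ : ℤ := ((2 * n - 1) * ν) % (4 * n) with hq₀
  have h4n : (0:ℤ) < 4 * n := by linarith
  have hq₀0 : 0 ≤ q₀ := Int.emod_nonneg _ (ne_of_gt h4n)
  have hq₀lt : q₀ < 4 * n := Int.emod_lt_of_pos _ h4n
  have hd : (4 * n) ∣ (2 * n - 1) * ν - q₀ := Int.dvd_self_sub_of_emod_eq hq₀.symm
  have hdiv : (4 * n) ∣ ν - (2 * n - 1) * q₀ := by
    obtain ⟨c, hc⟩ := hd
    exact ⟨(2 * n - 1) * c - (n - 1) * ν, by linear_combination (2 * n - 1) * hc⟩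
  suffices hfind : ∃ q' r' : ℤ, 0 ≤ q' ∧ 0 ≤ r' ∧
      q' * B + r' * C ≤ (4 * n - 2) * B + k * C ∧ A ∣ m - (q' * B + r' * C) by
    obtain ⟨q', r', hq', hr', hle, hdvd⟩ := hfind
    obtain ⟨p, hp⟩ := hdvd
    have hppos : 0 ≤ p := by
      by_contra hcon
      push_neg at hcon
      have hp1 : p ≤ -1 := Int.lt_add_one_iff.mp (by linarith)
      nlinarith [mul_le_mul_of_nonneg_left hp1 (le_of_lt hApos)]
    exact ⟨p, q', r', hppos, hq', hr', by linear_combination -hp⟩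
  by_cases hcase : (2 * n - 1) * q₀ ≤ ν
  · -- Case 1 : ν itself is representable
    obtain ⟨r, hr⟩ := hdiv
    have hr0 : 0 ≤ r := by
      by_contra hcon
      push_neg at hcon
      have : r ≤ -1 := Int.lt_add_one_iff.mp (by linarith)
      nlinarith [mul_le_mul_of_nonneg_left this (show (0:ℤ) ≤ 4 * n by linarith)]
    have hrk : r ≤ k := by
      by_contra hcon
      push_neg at hcon
      have h1 : k + 1 ≤ r := by exact hcon
      nlinarith [mul_le_mul_of_nonneg_left h1 (show (0:ℤ) ≤ 4 * n by linarith)]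
    have he : q₀ * B + r * C = (q₀ + r) * A + a * ν := by
      linear_combination (-a) * hr + q₀ * hBA + r * hCA
    refine ⟨q₀, r, hq₀0, hr0, ?_, ?_⟩
    · rcases lt_or_ge q₀ (4 * n - 1) with hlt | hge
      · have hq2 : q₀ ≤ 4 * n - 2 := Int.lt_add_one_iff.mp (by linarith)
        nlinarith [mul_nonneg (show (0:ℤ) ≤ 4 * n - 2 - q₀ by linarith) (le_of_lt hBpos),
          mul_nonneg (show (0:ℤ) ≤ k - r by linarith) (le_of_lt hCpos)]
      · have hqeq : q₀ = 4 * n - 1 := le_antisymm (Int.lt_add_one_iff.mp (by linarith)) hge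
        have hrk2 : r ≤ k - 2 * n + 1 := by
          by_contra hcon
          push_neg at hcon
          have h1 : k - 2 * n + 2 ≤ r := by linarith
          rw [hqeq] at hr
          nlinarith [mul_le_mul_of_nonneg_left h1 (show (0:ℤ) ≤ 4 * n by linarith)]
        have hkr : 1 ≤ k - r := by linarith
        have : C ≤ (k - r) * C := by
          nlinarith [mul_le_mul_of_nonneg_right hkr (le_of_lt hCpos)]
        nlinarith [hqeq]
    · obtain ⟨c, hc⟩ := hmod
      exact ⟨-c - (q₀ + r), by linear_combination -he - hc⟩
  · -- Case 2 : use ν + A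
    push_neg at hcase
    have hq₀1 : 1 ≤ q₀ := by
      by_contra hcon
      push_neg at hcon
      have h0 : q₀ = 0 := le_antisymm (Int.lt_add_one_iff.mp (by linarith)) hq₀0
      rw [h0] at hcase
      simp at hcase
      linarith
    obtain ⟨c2, hc2⟩ := hdiv
    set r : ℤ := c2 + k + 1 with hrdef0
    have hrdef : (2 * n - 1) * (q₀ - 1) + 4 * n * r = ν + A := by
      rw [hrdef0]
      linear_combination (-1) * hc2 - hA4
    have hq4n2 : q₀ - 1 ≤ 4 * n - 2 := by linarith
    have hr0 : 0 ≤ r := by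
      by_contra hcon
      push_neg at hcon
      have h1 : r ≤ -1 := Int.lt_add_one_iff.mp (by linarith)
      nlinarith [mul_le_mul_of_nonneg_left h1 (show (0:ℤ) ≤ 4 * n by linarith),
        mul_le_mul_of_nonneg_left hq4n2 (show (0:ℤ) ≤ 2 * n - 1 by linarith)]
    have hrk : r ≤ k := by
      by_contra hcon
      push_neg at hcon
      have h1 : k + 1 ≤ r := by exact hcon
      nlinarith [mul_le_mul_of_nonneg_left h1 (show (0:ℤ) ≤ 4 * n by linarith),
        mul_nonneg (show (0:ℤ) ≤ 2 * n - 1 by linarith) (show (0:ℤ) ≤ q₀ - 1 by linarith)]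
    have he : (q₀ - 1) * B + r * C = (q₀ - 1 + r + a) * A + a * ν := by
      linear_combination (q₀ - 1) * hBA + r * hCA + a * hrdef
    refine ⟨q₀ - 1, r, by linarith, hr0, ?_, ?_⟩
    · nlinarith [mul_nonneg (show (0:ℤ) ≤ 4 * n - 2 - (q₀ - 1) by linarith) (le_of_lt hBpos),
        mul_nonneg (show (0:ℤ) ≤ k - r by linarith) (le_of_lt hCpos)]
    · obtain ⟨c, hc⟩ := hmod
      exact ⟨-c - (q₀ - 1 + r + a), by linear_combination -he - hc⟩



/-- The 2-step star number `S_{a,n} = a·n·(n−2) + 1`. -/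
def twoStepStar (a n : ℕ) : ℕ := a * n * (n - 2) + 1

lemma mem_closure_triple {A B C x : ℕ} :
    x ∈ AddSubmonoid.closure ({A, B, C} : Set ℕ) ↔ ∃ p q r : ℕ, p * A + q * B + r * C = x := by
  constructor
  · intro hx
    induction hx using AddSubmonoid.closure_induction with
    | mem y hy =>
      rcases hy with rfl | rfl | rfl
      · exact ⟨1, 0, 0, by ring⟩
      · exact ⟨0, 1, 0, by ring⟩
      · exact ⟨0, 0, 1, by ring⟩
    | zero => exact ⟨0, 0, 0, by ring⟩
    | add y z hy hz ihy ihz =>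
      obtain ⟨p, q, r, rfl⟩ := ihy
      obtain ⟨p', q', r', rfl⟩ := ihz
      exact ⟨p + p', q + q', r + r', by ring⟩
  · rintro ⟨p, q, r, rfl⟩
    have hA : A ∈ AddSubmonoid.closure ({A, B, C} : Set ℕ) :=
      AddSubmonoid.subset_closure (by simp)
    have hB : B ∈ AddSubmonoid.closure ({A, B, C} : Set ℕ) :=
      AddSubmonoid.subset_closure (by simp)
    have hC : C ∈ AddSubmonoid.closure ({A, B, C} : Set ℕ) :=
      AddSubmonoid.subset_closure (by simp)
    exact add_mem (add_mem (AddSubmonoid.nsmul_mem _ hA p) (AddSubmonoid.nsmul_mem _ hB q))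
      (AddSubmonoid.nsmul_mem _ hC r)

set_option maxHeartbeats 1000000 in
theorem frobenius_twoStepStar_three_zero (a n : ℕ) (ha : 7 ≤ a) (ha4 : a % 4 = 3) (hn : 3 ≤ n) (hn4 : n % 4 = 0) (hbig : 8 * n - 2 ≤ a * (n - 2)) :
    ∃ g : ℕ,
      FrobeniusNumber g
        {twoStepStar a n, twoStepStar a (n + 1), twoStepStar a (n + 2)} ∧
      (g : ℚ) = (4 * (n : ℚ) - 2) * twoStepStar a (n + 1) + (((a : ℚ) * ((n : ℚ) - 2) - 2) / 4) * twoStepStar a (n + 2) - twoStepStar a n := by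
  have hn4' : 4 ≤ n := by omega
  have h2 : a * (n - 2) % 4 = 2 := by
    rw [Nat.mul_mod, ha4, show (n - 2) % 4 = 2 by omega]
  obtain ⟨k, hk⟩ : ∃ k, a * (n - 2) = 4 * k + 2 := ⟨a * (n - 2) / 4, by omega⟩
  set A := twoStepStar a n with hAdef
  set B := twoStepStar a (n + 1) with hBdef
  set C := twoStepStar a (n + 2) with hCdef
  -- integer casts of A B C
  have castA : ((A : ℕ) : ℤ) = (a : ℤ) * n * ((n : ℤ) - 2) + 1 := by
    rw [hAdef]; unfold twoStepStar
    push_cast [Nat.cast_sub (show 2 ≤ n by omega)]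
    ring
  have castB : ((B : ℕ) : ℤ) = (a : ℤ) * ((n : ℤ) + 1) * ((n : ℤ) - 1) + 1 := by
    rw [hBdef]; unfold twoStepStar
    push_cast [Nat.cast_sub (show 1 ≤ n by omega)]
    ring
  have castC : ((C : ℕ) : ℤ) = (a : ℤ) * ((n : ℤ) + 2) * (n : ℤ) + 1 := by
    rw [hCdef]; unfold twoStepStar
    push_cast
    ring
  have hcast : ((4 * n - 2 : ℕ) : ℤ) = 4 * (n : ℤ) - 2 := by
    rw [Nat.cast_sub (by omega : 2 ≤ 4 * n)]; push_cast; ring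
  have hkZ : (a : ℤ) * ((n : ℤ) - 2) = 4 * (k : ℤ) + 2 := by
    have h := congrArg (Nat.cast (R := ℤ)) hk
    push_cast [Nat.cast_sub (show 2 ≤ n by omega)] at h
    linarith
  have hbigZ : 8 * (n : ℤ) - 2 ≤ (a : ℤ) * ((n : ℤ) - 2) := by
    have h := hbig
    zify [show 2 ≤ 8 * n by omega, show 2 ≤ n by omega] at h
    exact h
  have haZ : (7 : ℤ) ≤ (a : ℤ) := by exact_mod_cast ha
  have hnZ : (4 : ℤ) ≤ (n : ℤ) := by exact_mod_cast hn4'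
  -- g
  have hAB : A ≤ B := by
    rw [hAdef, hBdef]; unfold twoStepStar
    gcongr <;> omega
  have hAle : A ≤ (4 * n - 2) * B + k * C := by
    calc A ≤ B := hAB
    _ ≤ (4 * n - 2) * B := Nat.le_mul_of_pos_left _ (by omega)
    _ ≤ (4 * n - 2) * B + k * C := Nat.le_add_right _ _
  refine ⟨(4 * n - 2) * B + k * C - A, ?_, ?_⟩
  · have hgA : ((4 * n - 2) * B + k * C - A) + A = (4 * n - 2) * B + k * C := by omega
    constructor
    · -- g is not representable
      intro hmem
      rw [mem_closure_triple] at hmem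
      obtain ⟨p, q, r, hpqr⟩ := hmem
      have hNat : p * A + q * B + r * C + A = (4 * n - 2) * B + k * C := by
        rw [hpqr]; exact hgA
      have hZ : (p : ℤ) * (A : ℤ) + (q : ℤ) * (B : ℤ) + (r : ℤ) * (C : ℤ) + (A : ℤ)
          = ((4 * n - 2 : ℕ) : ℤ) * (B : ℤ) + (k : ℤ) * (C : ℤ) := by exact_mod_cast hNat
      rw [castA, castB, castC, hcast] at hZ
      exact key_nonrep (a : ℤ) (n : ℤ) (k : ℤ) (p : ℤ) (q : ℤ) (r : ℤ) haZ hnZ hkZ hbigZ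
        (by positivity) (by positivity) (by positivity) (by linear_combination hZ)
    · -- upper bound
      rintro x hx
      by_contra hgx
      push_neg at hgx
      have hNat2 : (4 * n - 2) * B + k * C < x + A := by
        have h' : ((4 * n - 2) * B + k * C - A) + A < x + A := by omega
        omega
      have hZ2 : ((4 * n - 2 : ℕ) : ℤ) * (B : ℤ) + (k : ℤ) * (C : ℤ)
          < (x : ℤ) + (A : ℤ) := by exact_mod_cast hNat2
      rw [castA, castB, castC, hcast] at hZ2
      obtain ⟨p, q, r, hp, hq, hr, hsum⟩ :=
        key_rep (a : ℤ) (n : ℤ) (k : ℤ) (x : ℤ) haZ hnZ hkZ hbigZ hZ2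
      lift p to ℕ using hp
      lift q to ℕ using hq
      lift r to ℕ using hr
      rw [← castA, ← castB, ← castC] at hsum
      have hxrep : p * A + q * B + r * C = x := by exact_mod_cast hsum
      exact hx (mem_closure_triple.mpr ⟨p, q, r, hxrep⟩)
  · -- the rational formula
    have hgA : ((4 * n - 2) * B + k * C - A) + A = (4 * n - 2) * B + k * C := by omega
    have hQ : (((4 * n - 2) * B + k * C - A : ℕ) : ℚ) + (A : ℚ)
        = ((4 * n - 2 : ℕ) : ℚ) * (B : ℚ) + (k : ℚ) * (C : ℚ) := by exact_mod_cast hgA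
    have hcastQ : ((4 * n - 2 : ℕ) : ℚ) = 4 * (n : ℚ) - 2 := by
      rw [Nat.cast_sub (by omega : 2 ≤ 4 * n)]; push_cast; ring
    have hkQ : (a : ℚ) * ((n : ℚ) - 2) = 4 * (k : ℚ) + 2 := by
      have h := congrArg (Nat.cast (R := ℚ)) hk
      push_cast [Nat.cast_sub (show 2 ≤ n by omega)] at h
      linarith
    rw [hcastQ] at hQ
    linear_combination hQ - ((C : ℕ) : ℚ) / 4 * hkQ
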